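/- Suppose M = 2 and K_absorb is nonempty and equals a contiguous interval {k1, k1+1, …, k2} with 1 ≤ k1 ≤ k2 ≤ K−2. Then there exists a constant c_min > 0 such that, whenever c_1 ≥ c_min and c_2 ≥ c_min, every optimal solution (p*, p*_chg) of the operator's quadratic program satisfies, for each m ∈ {1,2}: p*_{m,k} = 0 for all k = 0,…,k1−1; p*_{m,k} = λ_{m,k}·(pg,min − pL,k) for all k ∈ K_absorb, where λ_{1,k} ≥ 0, λ_{2,k} ≥ 0 and λ_{1,k} + λ_{2,k} = 1 for every k ∈ K_absorb; and p*_{m,k} ≤ 0 for all k = k2+1,…,K−1. Moreover p*_chg,m,k = p*_{m,k} for k ∈ K_absorb and p*_chg,m,k = 0 for k ∉ K_absorb. -/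

import Mathlib

/-- Feasibility of a pair `(p, pchg)` for the operator's quadratic program. -/
def Feasible (K M : ℕ) (Δ pgmin : ℝ) (pL emax : ℕ → ℝ)
    (p pchg : ℕ → ℕ → ℝ) : Prop :=
  (∀ k < K, pgmin - pL k ≤ ∑ m ∈ Finset.range M, p m k) ∧
  (∀ m < M, ∀ k < K, 0 ≤ pchg m k ∧ p m k ≤ pchg m k) ∧
  (∀ m < M, ∀ k, 1 ≤ k → k ≤ K - 1 →
    0 ≤ ∑ j ∈ Finset.range k, p m j ∧ ∑ j ∈ Finset.range k, p m j ≤ emax m / Δ) ∧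
  (∀ m < M, ∑ j ∈ Finset.range K, p m j = 0)

/-- The operator's objective. -/
noncomputable def Objective (K M : ℕ) (a : ℝ) (pL c : ℕ → ℝ)
    (p pchg : ℕ → ℕ → ℝ) : ℝ :=
  (1/2) * ∑ k ∈ Finset.range K, (∑ m ∈ Finset.range M, p m k)^2
    + ∑ k ∈ Finset.range K, ∑ m ∈ Finset.range M, pL k * p m k
    + ∑ k ∈ Finset.range K, ∑ m ∈ Finset.range M, (c m / a) * pchg m k

/-- A feasible pair is optimal if it minimizes the objective over the feasible set. -/
noncomputable def Optimal (K M : ℕ) (Δ a pgmin : ℝ) (pL emax c : ℕ → ℝ)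
    (p pchg : ℕ → ℕ → ℝ) : Prop :=
  Feasible K M Δ pgmin pL emax p pchg ∧
  ∀ q qchg : ℕ → ℕ → ℝ, Feasible K M Δ pgmin pL emax q qchg →
    Objective K M a pL c p pchg ≤ Objective K M a pL c q qchg

open Finset

private lemma two_sum (f : ℕ → ℝ) : ∑ m ∈ Finset.range 2, f m = f 0 + f 1 := by
  simp [Finset.sum_range_succ]

private lemma pp_decomp (x : ℝ) : max x 0 = x + max (-x) 0 := by
  rcases le_total x 0 with h | h
  · rw [max_eq_right h, max_eq_left (by linarith)]; ring
  · rw [max_eq_left h, max_eq_right (by linarith)]; ring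

private lemma abs_eq_pp (x : ℝ) : |x| = max x 0 + max (-x) 0 := by
  rcases le_total x 0 with h | h
  · rw [abs_of_nonpos h, max_eq_right h, max_eq_left (by linarith)]; ring
  · rw [abs_of_nonneg h, max_eq_left h, max_eq_right (by linarith)]; ring

private lemma pp_add_le (x y : ℝ) : max (x + y) 0 ≤ max x 0 + max y 0 := by
  rcases le_total (x+y) 0 with h | h
  · rw [max_eq_right h]; positivity
  · rw [max_eq_left h]; exact add_le_add (le_max_left x 0) (le_max_left y 0)

private lemma split3sum (K k1 k2 : ℕ) (h1 : k1 ≤ k2 + 1) (h2 : k2 + 1 ≤ K) (f : ℕ → ℝ) :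
    ∑ k ∈ Finset.range K, f k
      = ∑ k ∈ Finset.range k1, f k + ∑ k ∈ Finset.Ico k1 (k2+1), f k
        + ∑ k ∈ Finset.Ico (k2+1) K, f k := by
  rw [Finset.range_eq_Ico, ← Finset.sum_Ico_consecutive f (Nat.zero_le (k2+1)) h2,
    ← Finset.sum_Ico_consecutive f (Nat.zero_le k1) h1, ← Finset.range_eq_Ico]

private lemma pp_zero {x : ℝ} (h : max x 0 = 0) : x ≤ 0 := by
  rw [← h]; exact le_max_left _ _

set_option maxHeartbeats 2000000 in
/-- Duopoly (`M = 2`), with `K_absorb = {k < K : pL,k ≤ pg,min}` equal to the contiguous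
interval `{k1, …, k2}`, `1 ≤ k1 ≤ k2 ≤ K − 2`.  There is `c_min > 0` such that for all bids
`c_m ≥ c_min`, every optimal solution satisfies: `p*_{m,k} = 0` before `k1`;
`p*_{m,k} = λ_{m,k} (pg,min − pL,k)` with `λ_{1,k}, λ_{2,k} ≥ 0`, `λ_{1,k}+λ_{2,k} = 1`
on `K_absorb`; `p*_{m,k} ≤ 0` after `k2`; and `pchg*_{m,k} = p*_{m,k}` on `K_absorb`,
`pchg*_{m,k} = 0` off `K_absorb`. -/
theorem stmt5 (K : ℕ) (Δ a pgmin : ℝ) (hΔ : 0 < Δ) (ha : 0 < a)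
    (pL emax : ℕ → ℝ) (hemax : ∀ m < 2, 0 < emax m)
    (k1 k2 : ℕ) (hk1 : 1 ≤ k1) (hk12 : k1 ≤ k2) (hk2 : k2 + 2 ≤ K)
    (habsorb : ∀ k < K, (pL k ≤ pgmin ↔ k1 ≤ k ∧ k ≤ k2))
    (hne : ∃ p pchg : ℕ → ℕ → ℝ, Feasible K 2 Δ pgmin pL emax p pchg) :
    ∃ cmin : ℝ, 0 < cmin ∧
      ∀ c : ℕ → ℝ, (∀ m < 2, cmin ≤ c m) →
        ∀ p pchg : ℕ → ℕ → ℝ, Optimal K 2 Δ a pgmin pL emax c p pchg →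
          ∃ lam : ℕ → ℕ → ℝ,
            (∀ k, k1 ≤ k → k ≤ k2 →
              0 ≤ lam 0 k ∧ 0 ≤ lam 1 k ∧ lam 0 k + lam 1 k = 1) ∧
            ∀ m < 2,
              (∀ k < k1, p m k = 0) ∧
              (∀ k, k1 ≤ k → k ≤ k2 →
                p m k = lam m k * (pgmin - pL k) ∧ pchg m k = p m k) ∧
              (∀ k, k2 < k → k < K → p m k ≤ 0) ∧
              (∀ k < K, ¬(k1 ≤ k ∧ k ≤ k2) → pchg m k = 0) := by
  classical
  have hE0 : 0 < emax 0 / Δ := div_pos (hemax 0 (by norm_num)) hΔ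
  have hE1 : 0 < emax 1 / Δ := div_pos (hemax 1 (by norm_num)) hΔ
  set R : ℝ := emax 0 / Δ + emax 1 / Δ with hRdef
  set Dsum : ℝ := ∑ k ∈ Finset.range K, |pgmin - pL k| with hDdef
  set PLsum : ℝ := ∑ k ∈ Finset.range K, |pL k| with hPLdef
  set CQ : ℝ := R + Dsum + PLsum with hCQdef
  have hDsum0 : 0 ≤ Dsum := Finset.sum_nonneg fun k _ => abs_nonneg _
  have hPLsum0 : 0 ≤ PLsum := Finset.sum_nonneg fun k _ => abs_nonneg _
  have hCQ0 : 0 ≤ CQ := by rw [hCQdef]; have : (0:ℝ) < R := by positivity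
                           linarith
  refine ⟨4*a*(CQ+1), by nlinarith, ?_⟩
  intro c hc p pchg hopt
  obtain ⟨⟨hfi, hfii, hfiii, hfiv⟩, hmin⟩ := hopt
  have hcm : ∀ m < 2, 0 < c m / a := by
    intro m hm
    have := hc m hm
    have : (0:ℝ) < c m := by nlinarith
    positivity
  -- basic notation
  set d : ℕ → ℝ := fun k => pgmin - pL k with hddef
  set S : ℕ → ℝ := fun k => p 0 k + p 1 k with hSdef
  have hdA : ∀ k, k1 ≤ k → k ≤ k2 → 0 ≤ d k := by
    intro k h h'
    have := (habsorb k (by omega)).2 ⟨h, h'⟩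
    simp only [hddef]; linarith
  have hdoff : ∀ k < K, ¬(k1 ≤ k ∧ k ≤ k2) → d k < 0 := by
    intro k hk hnk
    by_contra h
    exact hnk ((habsorb k hk).1 (by simp only [hddef] at h; linarith))
  have hSd : ∀ k < K, d k ≤ S k := by
    intro k hk
    have h := hfi k hk
    have h2 : ∑ m ∈ Finset.range 2, p m k = p 0 k + p 1 k := two_sum _
    simp only [hddef, hSdef]; rw [← h2]; exact h
  -- partial sums bounds
  have hP : ∀ m < 2, ∀ k ≤ K, 0 ≤ ∑ j ∈ Finset.range k, p m j ∧
      ∑ j ∈ Finset.range k, p m j ≤ emax m / Δ := by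
    intro m hm k hk
    rcases Nat.eq_zero_or_pos k with rfl | hk0
    · simp; exact le_of_lt (div_pos (hemax m hm) hΔ)
    rcases eq_or_lt_of_le hk with rfl | hkK
    · rw [hfiv m hm]; exact ⟨le_refl 0, le_of_lt (div_pos (hemax m hm) hΔ)⟩
    · exact hfiii m hm k hk0 (by omega)
  have hpb : ∀ m < 2, ∀ k < K, |p m k| ≤ emax m / Δ := by
    intro m hm k hk
    have h1 := hP m hm k (by omega)
    have h2 := hP m hm (k+1) (by omega)
    rw [Finset.sum_range_succ] at h2
    rw [abs_le]; constructor <;> linarith [h1.1, h1.2, h2.1, h2.2]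
  have hSb : ∀ k < K, |S k| ≤ R := by
    intro k hk
    have h0 := hpb 0 (by norm_num) k hk
    have h1 := hpb 1 (by norm_num) k hk
    simp only [hSdef, hRdef]
    calc |p 0 k + p 1 k| ≤ |p 0 k| + |p 1 k| := abs_add_le _ _
      _ ≤ _ := by linarith
  -- step 0 : pchg is the positive part of p
  have hpchg : ∀ m < 2, ∀ k < K, pchg m k = max (p m k) 0 := by
    have hfeas2 : Feasible K 2 Δ pgmin pL emax p (fun m k => max (p m k) 0) :=
      ⟨hfi, fun m hm k hk => ⟨le_max_right _ _, le_max_left _ _⟩, hfiii, hfiv⟩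
    have hle := hmin p _ hfeas2
    unfold Objective at hle
    have key : ∑ k ∈ Finset.range K, ∑ m ∈ Finset.range 2, (c m / a) * pchg m k
        ≤ ∑ k ∈ Finset.range K, ∑ m ∈ Finset.range 2, (c m / a) * max (p m k) 0 := by
      linarith
    have hterm : ∀ k ∈ Finset.range K,
        ∑ m ∈ Finset.range 2, (c m / a) * max (p m k) 0
          ≤ ∑ m ∈ Finset.range 2, (c m / a) * pchg m k := by
      intro k hk
      apply Finset.sum_le_sum
      intro m hm
      have hmk := hfii m (Finset.mem_range.1 hm) k (Finset.mem_range.1 hk)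
      exact mul_le_mul_of_nonneg_left (max_le hmk.2 hmk.1)
        (hcm m (Finset.mem_range.1 hm)).le
    have heq := le_antisymm (Finset.sum_le_sum hterm) key
    have h1 := (Finset.sum_eq_sum_iff_of_le hterm).1 heq
    intro m hm k hk
    have h2 := h1 k (Finset.mem_range.2 hk)
    have hterm2 : ∀ m' ∈ Finset.range 2,
        (c m' / a) * max (p m' k) 0 ≤ (c m' / a) * pchg m' k := by
      intro m' hm'
      have hmk := hfii m' (Finset.mem_range.1 hm') k hk
      exact mul_le_mul_of_nonneg_left (max_le hmk.2 hmk.1)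
        (hcm m' (Finset.mem_range.1 hm')).le
    have h3 := (Finset.sum_eq_sum_iff_of_le hterm2).1 h2 m (Finset.mem_range.2 hm)
    exact (mul_left_cancel₀ (ne_of_gt (hcm m hm)) h3).symm
  -- objective rewriting
  have hObj : ∀ r rchg : ℕ → ℕ → ℝ, Objective K 2 a pL c r rchg
      = (∑ k ∈ Finset.range K, ((1/2) * (r 0 k + r 1 k)^2 + pL k * (r 0 k + r 1 k)))
        + ((c 0 / a) * ∑ k ∈ Finset.range K, rchg 0 k
           + (c 1 / a) * ∑ k ∈ Finset.range K, rchg 1 k) := by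
    intro r rchg
    unfold Objective
    have e1 : ∀ k : ℕ, ∑ m ∈ Finset.range 2, r m k = r 0 k + r 1 k :=
      fun k => two_sum _
    have e2 : ∀ k : ℕ, ∑ m ∈ Finset.range 2, pL k * r m k
        = pL k * (r 0 k + r 1 k) := fun k => by rw [two_sum]; ring
    have e3 : ∀ k : ℕ, ∑ m ∈ Finset.range 2, (c m / a) * rchg m k
        = (c 0 / a) * rchg 0 k + (c 1 / a) * rchg 1 k := fun k => two_sum _
    simp only [e1, e2, e3]
    rw [Finset.sum_add_distrib, Finset.sum_add_distrib, Finset.mul_sum,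
      Finset.mul_sum, Finset.mul_sum]
  -- quantities
  set Tmin : ℝ := ∑ k ∈ Finset.Ico k1 (k2+1), d k with hTmindef
  set T0 : ℝ := ∑ k ∈ Finset.range K, max (p 0 k) 0 with hT0def
  set T1 : ℝ := ∑ k ∈ Finset.range K, max (p 1 k) 0 with hT1def
  set vb1 : ℝ := ∑ k ∈ Finset.range k1, (max (p 0 k) 0 + max (p 1 k) 0) with hvb1def
  set vb2 : ℝ := ∑ k ∈ Finset.Ico (k2+1) K, (max (p 0 k) 0 + max (p 1 k) 0) with hvb2def
  set va : ℝ := ∑ k ∈ Finset.Ico k1 (k2+1), (max (-(p 0 k)) 0 + max (-(p 1 k)) 0) with hvadef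
  set vg : ℝ := ∑ k ∈ Finset.Ico k1 (k2+1), (S k - d k) with hvgdef
  set v : ℝ := va + vb1 + vb2 + vg with hvdef
  have hk121 : k1 ≤ k2 + 1 := by omega
  have hk21K : k2 + 1 ≤ K := by omega
  have hvb10 : 0 ≤ vb1 := Finset.sum_nonneg fun k _ => by positivity
  have hvb20 : 0 ≤ vb2 := Finset.sum_nonneg fun k _ => by positivity
  have hva0 : 0 ≤ va := Finset.sum_nonneg fun k _ => by positivity
  have hvg0 : 0 ≤ vg := Finset.sum_nonneg fun k hk => by
    have hmem := Finset.mem_Ico.1 hk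
    have := hSd k (by omega)
    linarith
  have hTmin0 : 0 ≤ Tmin := Finset.sum_nonneg fun k hk => by
    have hmem := Finset.mem_Ico.1 hk
    exact hdA k hmem.1 (by omega)
  have hT00 : 0 ≤ T0 := Finset.sum_nonneg fun k _ => le_max_right _ _
  have hT10 : 0 ≤ T1 := Finset.sum_nonneg fun k _ => le_max_right _ _
  have hSA : ∑ k ∈ Finset.Ico k1 (k2+1), S k = Tmin + vg := by
    rw [hTmindef, hvgdef, ← Finset.sum_add_distrib]
    exact Finset.sum_congr rfl fun k _ => by ring
  have hvT : T0 + T1 = Tmin + v := by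
    have h1 : T0 + T1 = ∑ k ∈ Finset.range K, (max (p 0 k) 0 + max (p 1 k) 0) := by
      rw [hT0def, hT1def, Finset.sum_add_distrib]
    rw [h1, split3sum K k1 k2 hk121 hk21K]
    have h2 : ∑ k ∈ Finset.Ico k1 (k2+1), (max (p 0 k) 0 + max (p 1 k) 0)
        = (Tmin + vg) + va := by
      rw [← hSA, hvadef, ← Finset.sum_add_distrib]
      apply Finset.sum_congr rfl
      intro k _
      rw [pp_decomp (p 0 k), pp_decomp (p 1 k)]
      simp only [hSdef]
      ring
    rw [h2, hvdef]; ring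
  -- epsilon
  set eps : ℝ := ∑ k ∈ Finset.range k1, S k with hepsdef
  have hSsum2 : ∀ n : ℕ, n ≤ K → ∑ k ∈ Finset.range n, S k
      = ∑ j ∈ Finset.range n, p 0 j + ∑ j ∈ Finset.range n, p 1 j := by
    intro n _
    rw [← Finset.sum_add_distrib]
  have heps0 : 0 ≤ eps := by
    have h0 := hP 0 (by norm_num) k1 (by omega)
    have h1 := hP 1 (by norm_num) k1 (by omega)
    rw [hepsdef, hSsum2 k1 (by omega)]
    linarith [h0.1, h1.1]
  have hepsle : eps ≤ vb1 := Finset.sum_le_sum fun k _ => by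
    simp only [hSdef]
    exact add_le_add (le_max_left _ _) (le_max_left _ _)
  have hnegb : ∀ m, m < 2 → ∑ k ∈ Finset.range k1, max (-(p m k)) 0
      ≤ ∑ k ∈ Finset.range k1, max (p m k) 0 := by
    intro m hm
    have hdec : ∑ k ∈ Finset.range k1, max (p m k) 0
        = ∑ k ∈ Finset.range k1, p m k + ∑ k ∈ Finset.range k1, max (-(p m k)) 0 := by
      rw [← Finset.sum_add_distrib]
      exact Finset.sum_congr rfl fun k _ => pp_decomp _
    have := (hP m hm k1 (by omega)).1
    linarith
  have habsS1 : ∑ k ∈ Finset.range k1, |S k| ≤ 2 * vb1 := by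
    have h1 : ∑ k ∈ Finset.range k1, |S k|
        ≤ ∑ k ∈ Finset.range k1, ((max (p 0 k) 0 + max (-(p 0 k)) 0)
            + (max (p 1 k) 0 + max (-(p 1 k)) 0)) := by
      apply Finset.sum_le_sum
      intro k _
      simp only [hSdef]
      calc |p 0 k + p 1 k| ≤ |p 0 k| + |p 1 k| := abs_add_le _ _
        _ = _ := by rw [abs_eq_pp, abs_eq_pp]
    have h2 : ∑ k ∈ Finset.range k1, ((max (p 0 k) 0 + max (-(p 0 k)) 0)
            + (max (p 1 k) 0 + max (-(p 1 k)) 0))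
        = (∑ k ∈ Finset.range k1, max (p 0 k) 0) + (∑ k ∈ Finset.range k1, max (-(p 0 k)) 0)
          + ((∑ k ∈ Finset.range k1, max (p 1 k) 0) + (∑ k ∈ Finset.range k1, max (-(p 1 k)) 0)) := by
      rw [← Finset.sum_add_distrib, ← Finset.sum_add_distrib, ← Finset.sum_add_distrib]
    have h3 : vb1 = (∑ k ∈ Finset.range k1, max (p 0 k) 0)
        + (∑ k ∈ Finset.range k1, max (p 1 k) 0) := by
      rw [hvb1def, Finset.sum_add_distrib]
    have h4 := hnegb 0 (by norm_num)
    have h5 := hnegb 1 (by norm_num)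
    linarith
  have hStot : ∑ k ∈ Finset.range K, S k = 0 := by
    rw [hSsum2 K le_rfl, hfiv 0 (by norm_num), hfiv 1 (by norm_num)]; ring
  -- N and Sstar
  set beta2 : ℝ := ∑ k ∈ Finset.Ico (k2+1) K, max (S k) 0 with hb2def
  set N : ℝ := - ∑ k ∈ Finset.Ico (k2+1) K, min (S k) 0 with hNdef
  have hbeta2vb2 : beta2 ≤ vb2 := Finset.sum_le_sum fun k _ => by
    simp only [hSdef]; exact pp_add_le _ _
  have hbeta20 : 0 ≤ beta2 := Finset.sum_nonneg fun _ _ => le_max_right _ _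
  have hminS : ∀ x : ℝ, min x 0 = x - max x 0 := fun x => by
    rcases le_total x 0 with h|h
    · rw [min_eq_left h, max_eq_right h]; ring
    · rw [min_eq_right h, max_eq_left h]; ring
  have hNeq : N = beta2 + eps + Tmin + vg := by
    have h1 : ∑ k ∈ Finset.Ico (k2+1) K, min (S k) 0
        = ∑ k ∈ Finset.Ico (k2+1) K, S k - beta2 := by
      rw [hb2def, ← Finset.sum_sub_distrib]
      exact Finset.sum_congr rfl fun k _ => hminS _
    have h2 := split3sum K k1 k2 hk121 hk21K S
    rw [hStot, hSA, ← hepsdef] at h2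
    rw [hNdef, h1]
    linarith
  have hTminN : Tmin ≤ N := by rw [hNeq]; linarith
  have hN0 : 0 ≤ N := le_trans hTmin0 hTminN
  set Sstar : ℕ → ℝ := fun k => min (S k) 0 * (Tmin / N) with hSsdef
  have hrat0 : 0 ≤ Tmin / N := div_nonneg hTmin0 hN0
  have hrat1 : Tmin / N ≤ 1 := by
    rcases eq_or_lt_of_le hN0 with h|h
    · rw [← h]; simp
    · exact (div_le_one h).2 hTminN
  have hSstar_np : ∀ k, Sstar k ≤ 0 := fun k => by
    simp only [hSsdef]
    exact mul_nonpos_of_nonpos_of_nonneg (min_le_right _ _) hrat0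
  have hSstar_ge_neg : ∀ k, min (S k) 0 ≤ Sstar k := fun k => by
    simp only [hSsdef]
    nlinarith [min_le_right (S k) 0, hrat0, hrat1]
  have hSstar_sum : ∑ k ∈ Finset.Ico (k2+1) K, Sstar k = -Tmin := by
    simp only [hSsdef]
    rw [← Finset.sum_mul]
    have hs : ∑ k ∈ Finset.Ico (k2+1) K, min (S k) 0 = -N := by
      rw [hNdef]; ring
    rw [hs]
    rcases eq_or_lt_of_le hN0 with h|h
    · have hT0' : Tmin = 0 := le_antisymm (h ▸ hTminN) hTmin0
      rw [← h, hT0']; simp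
    · have hN' : N ≠ 0 := ne_of_gt h
      field_simp
  have hSstar_ged : ∀ k, k2 < k → k < K → d k ≤ Sstar k := by
    intro k h1 h2
    have hd := hdoff k h2 (by omega)
    have := hSd k h2
    exact le_trans (le_min this hd.le) (hSstar_ge_neg k)
  -- the split of Tmin between the two firms
  set P0 : ℝ := ∑ j ∈ Finset.range (k2+1), p 0 j with hP0def
  set P1 : ℝ := ∑ j ∈ Finset.range (k2+1), p 1 j with hP1def
  have hP0b := hP 0 (by norm_num) (k2+1) (by omega)
  have hP1b := hP 1 (by norm_num) (k2+1) (by omega)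
  have hPT : ∀ m, m < 2 → ∑ j ∈ Finset.range (k2+1), p m j
      ≤ ∑ k ∈ Finset.range K, max (p m k) 0 := by
    intro m hm
    calc ∑ j ∈ Finset.range (k2+1), p m j
        ≤ ∑ j ∈ Finset.range (k2+1), max (p m j) 0 :=
          Finset.sum_le_sum fun j _ => le_max_left _ _
      _ ≤ _ := Finset.sum_le_sum_of_subset_of_nonneg
          (Finset.range_subset_range.2 (by omega)) (fun j _ _ => le_max_right _ _)
  have hP0T : P0 ≤ T0 := hPT 0 (by norm_num)
  have hP1T : P1 ≤ T1 := hPT 1 (by norm_num)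
  have hPsum : Tmin ≤ P0 + P1 := by
    have h1 : P0 + P1 = ∑ k ∈ Finset.range (k2+1), S k := by
      rw [hP0def, hP1def, hSsum2 (k2+1) (by omega)]
    have hsplit : eps + ∑ k ∈ Finset.Ico k1 (k2+1), S k
        = ∑ k ∈ Finset.range (k2+1), S k := by
      rw [hepsdef, Finset.range_eq_Ico]
      rw [Finset.sum_Ico_consecutive S (Nat.zero_le k1) hk121, Finset.range_eq_Ico]
    rw [h1, ← hsplit, hSA]
    linarith
  set t1 : ℝ := min T1 (min Tmin (emax 1 / Δ)) with ht1def
  set t0 : ℝ := Tmin - t1 with ht0def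
  have ht10 : 0 ≤ t1 := le_min hT10 (le_min hTmin0 hE1.le)
  have ht1T : t1 ≤ T1 := min_le_left _ _
  have ht1Tmin : t1 ≤ Tmin := le_trans (min_le_right _ _) (min_le_left _ _)
  have ht1E : t1 ≤ emax 1 / Δ := le_trans (min_le_right _ _) (min_le_right _ _)
  have ht00 : 0 ≤ t0 := by rw [ht0def]; linarith
  have hminP1 : min Tmin P1 ≤ t1 := by
    exact le_min (le_trans (min_le_right _ _) hP1T)
      (le_min (min_le_left _ _) (le_trans (min_le_right _ _) hP1b.2))
  have ht0T : t0 ≤ T0 := by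
    rcases le_total Tmin P1 with h|h
    · have h' := hminP1; rw [min_eq_left h] at h'
      rw [ht0def]; linarith
    · have h' := hminP1; rw [min_eq_right h] at h'
      rw [ht0def]; linarith [hPsum, hP0T]
  have ht0E : t0 ≤ emax 0 / Δ := by
    rcases le_total Tmin P1 with h|h
    · have h' := hminP1; rw [min_eq_left h] at h'
      rw [ht0def]; linarith [hE0]
    · have h' := hminP1; rw [min_eq_right h] at h'
      rw [ht0def]; linarith [hPsum, hP0b.2]
  have ht0Tmin : t0 ≤ Tmin := by rw [ht0def]; linarith
  set lam0 : ℝ := if 0 < Tmin then t0 / Tmin else 1/2 with hl0def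
  set lam1 : ℝ := 1 - lam0 with hl1def
  have hlam00 : 0 ≤ lam0 := by
    rw [hl0def]; split_ifs with h
    · exact div_nonneg ht00 hTmin0
    · norm_num
  have hlam01 : lam0 ≤ 1 := by
    rw [hl0def]; split_ifs with h
    · exact (div_le_one h).2 ht0Tmin
    · norm_num
  have hlam0T : lam0 * Tmin = t0 := by
    rw [hl0def]; split_ifs with h
    · field_simp
    · have hT : Tmin = 0 := le_antisymm (not_lt.1 h) hTmin0
      have ht1z : t1 = 0 := le_antisymm (hT ▸ ht1Tmin) ht10
      rw [hT, ht0def, hT, ht1z]; ring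
  have hlam1T : lam1 * Tmin = t1 := by
    have h1 : lam1 * Tmin = Tmin - lam0 * Tmin := by rw [hl1def]; ring
    rw [h1, hlam0T, ht0def]; ring
  have hlam10 : 0 ≤ lam1 := by rw [hl1def]; linarith
  -- the comparison point q
  set base : ℕ → ℝ := fun k => if k < k1 then 0 else if k ≤ k2 then d k
      else if k < K then Sstar k else 0 with hbasedef
  have hbase1 : ∀ k, k < k1 → base k = 0 := fun k h => by
    simp only [hbasedef]; rw [if_pos h]
  have hbaseA : ∀ k, k1 ≤ k → k ≤ k2 → base k = d k := fun k h h' => by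
    simp only [hbasedef]; rw [if_neg (by omega), if_pos h']
  have hbaseB : ∀ k, k2 < k → k < K → base k = Sstar k := fun k h h' => by
    simp only [hbasedef]; rw [if_neg (by omega), if_neg (by omega), if_pos h']
  have hbsum1 : ∀ k, k ≤ k1 → ∑ j ∈ Finset.range k, base j = 0 := by
    intro k hk
    apply Finset.sum_eq_zero
    intro j hj
    exact hbase1 j (by have := Finset.mem_range.1 hj; omega)
  have hbsumA : ∀ k, k1 ≤ k → k ≤ k2+1 →
      ∑ j ∈ Finset.range k, base j = ∑ j ∈ Finset.Ico k1 k, d j := by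
    intro k h1 h2
    rw [Finset.range_eq_Ico, ← Finset.sum_Ico_consecutive base (Nat.zero_le k1) h1]
    have z : ∑ j ∈ Finset.Ico 0 k1, base j = 0 := by
      rw [← Finset.range_eq_Ico]; exact hbsum1 k1 le_rfl
    rw [z, zero_add]
    exact Finset.sum_congr rfl fun j hj => by
      have := Finset.mem_Ico.1 hj
      exact hbaseA j this.1 (by omega)
  have hTminbase : ∑ j ∈ Finset.range (k2+1), base j = Tmin := by
    rw [hbsumA (k2+1) (by omega) le_rfl, hTmindef]
  have hbsumB : ∀ k, k2+1 ≤ k → k ≤ K →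
      ∑ j ∈ Finset.range k, base j = Tmin + ∑ j ∈ Finset.Ico (k2+1) k, Sstar j := by
    intro k h1 h2
    rw [Finset.range_eq_Ico, ← Finset.sum_Ico_consecutive base (Nat.zero_le (k2+1)) h1,
      ← Finset.range_eq_Ico, hTminbase]
    congr 1
    exact Finset.sum_congr rfl fun j hj => by
      have := Finset.mem_Ico.1 hj
      exact hbaseB j (by omega) (by omega)
  have hbaseK : ∑ j ∈ Finset.range K, base j = 0 := by
    rw [hbsumB K (by omega) le_rfl, hSstar_sum]; ring
  have hbb : ∀ k, k ≤ K → 0 ≤ ∑ j ∈ Finset.range k, base j ∧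
      ∑ j ∈ Finset.range k, base j ≤ Tmin := by
    intro k hk
    rcases le_or_gt k k1 with h|h
    · rw [hbsum1 k h]; exact ⟨le_rfl, hTmin0⟩
    rcases le_or_gt k (k2+1) with h'|h'
    · rw [hbsumA k (by omega) h']
      constructor
      · exact Finset.sum_nonneg fun j hj => by
          have := Finset.mem_Ico.1 hj
          exact hdA j this.1 (by omega)
      · rw [hTmindef]
        exact Finset.sum_le_sum_of_subset_of_nonneg
          (Finset.Ico_subset_Ico le_rfl h')
          (fun j hj _ => by
            have := Finset.mem_Ico.1 hj
            exact hdA j this.1 (by omega))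
    · rw [hbsumB k (by omega) hk]
      have hnp2 : ∑ j ∈ Finset.Ico (k2+1) k, Sstar j ≤ 0 :=
        Finset.sum_nonpos fun j _ => hSstar_np j
      constructor
      · have hsplit : ∑ j ∈ Finset.Ico (k2+1) k, Sstar j
            + ∑ j ∈ Finset.Ico k K, Sstar j = ∑ j ∈ Finset.Ico (k2+1) K, Sstar j :=
          Finset.sum_Ico_consecutive _ (by omega) hk
        have hnp : ∑ j ∈ Finset.Ico k K, Sstar j ≤ 0 :=
          Finset.sum_nonpos fun j _ => hSstar_np j
        rw [hSstar_sum] at hsplit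
        linarith
      · linarith
  set q : ℕ → ℕ → ℝ := fun m k => (if m = 0 then lam0 else lam1) * base k with hqdef
  have hco : ∀ m, m < 2 → 0 ≤ (if m = 0 then lam0 else lam1) := by
    intro m hm; split_ifs
    exacts [hlam00, hlam10]
  have hcoE : ∀ m, m < 2 → (if m = 0 then lam0 else lam1) * Tmin ≤ emax m / Δ := by
    intro m hm
    interval_cases m
    · rw [if_pos rfl, hlam0T]; exact ht0E
    · rw [if_neg (by norm_num), hlam1T]; exact ht1E
  have hqS : ∀ k, q 0 k + q 1 k = base k := by
    intro k
    have h0 : q 0 k = lam0 * base k := by simp [hqdef]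
    have h1 : q 1 k = lam1 * base k := by simp [hqdef]
    rw [h0, h1, hl1def]; ring
  have hqsum : ∀ m, ∀ n : ℕ, ∑ j ∈ Finset.range n, q m j
      = (if m = 0 then lam0 else lam1) * ∑ j ∈ Finset.range n, base j := by
    intro m n
    rw [Finset.mul_sum]
  have hqfeas : Feasible K 2 Δ pgmin pL emax q (fun m k => max (q m k) 0) := by
    refine ⟨?_, fun m hm k hk => ⟨le_max_right _ _, le_max_left _ _⟩, ?_, ?_⟩
    · intro k hk
      have h2 : ∑ m ∈ Finset.range 2, q m k = q 0 k + q 1 k := two_sum _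
      rw [h2, hqS]
      rcases lt_or_ge k k1 with h|h
      · rw [hbase1 k h]
        have := hdoff k hk (by omega)
        simp only [hddef] at this
        linarith
      rcases le_or_gt k k2 with h'|h'
      · rw [hbaseA k h h']
      · rw [hbaseB k h' hk]
        exact hSstar_ged k h' hk
    · intro m hm k hk1' hk2'
      rw [hqsum m k]
      have hb := hbb k (by omega)
      constructor
      · exact mul_nonneg (hco m hm) hb.1
      · calc (if m = 0 then lam0 else lam1) * ∑ j ∈ Finset.range k, base j
            ≤ (if m = 0 then lam0 else lam1) * Tmin :=
              mul_le_mul_of_nonneg_left hb.2 (hco m hm)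
          _ ≤ emax m / Δ := hcoE m hm
    · intro m hm
      rw [hqsum m K, hbaseK, mul_zero]
  have hbasepp : ∑ k ∈ Finset.range K, max (base k) 0 = Tmin := by
    rw [split3sum K k1 k2 hk121 hk21K]
    have h1 : ∑ k ∈ Finset.range k1, max (base k) 0 = 0 :=
      Finset.sum_eq_zero fun k hk => by
        rw [hbase1 k (Finset.mem_range.1 hk)]; simp
    have h2 : ∑ k ∈ Finset.Ico k1 (k2+1), max (base k) 0 = Tmin := by
      rw [hTmindef]
      apply Finset.sum_congr rfl
      intro k hk
      have := Finset.mem_Ico.1 hk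
      rw [hbaseA k this.1 (by omega), max_eq_left (hdA k this.1 (by omega))]
    have h3 : ∑ k ∈ Finset.Ico (k2+1) K, max (base k) 0 = 0 :=
      Finset.sum_eq_zero fun k hk => by
        have := Finset.mem_Ico.1 hk
        rw [hbaseB k (by omega) this.2, max_eq_right (hSstar_np k)]
    rw [h1, h2, h3]; ring
  have hqpp : ∀ m, m < 2 → ∑ k ∈ Finset.range K, max (q m k) 0
      = (if m = 0 then lam0 else lam1) * Tmin := by
    intro m hm
    have he : ∀ k, max (q m k) 0 = (if m = 0 then lam0 else lam1) * max (base k) 0 := by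
      intro k
      rw [mul_max_of_nonneg _ _ (hco m hm), mul_zero]
    simp only [he]
    rw [← Finset.mul_sum, hbasepp]
  have hq0pp : ∑ k ∈ Finset.range K, max (q 0 k) 0 = t0 := by
    have h := hqpp 0 (by norm_num)
    rw [if_pos rfl, hlam0T] at h
    exact h
  have hq1pp : ∑ k ∈ Finset.range K, max (q 1 k) 0 = t1 := by
    have h := hqpp 1 (by norm_num)
    rw [if_neg (by norm_num), hlam1T] at h
    exact h
  -- distance estimate
  have hdist : ∑ k ∈ Finset.range K, |base k - S k| ≤ 4 * v := by
    rw [split3sum K k1 k2 hk121 hk21K]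
    have h1 : ∑ k ∈ Finset.range k1, |base k - S k| ≤ 2 * vb1 := by
      have he : ∀ k ∈ Finset.range k1, |base k - S k| = |S k| := by
        intro k hk
        rw [hbase1 k (Finset.mem_range.1 hk), zero_sub, abs_neg]
      rw [Finset.sum_congr rfl he]
      exact habsS1
    have h2 : ∑ k ∈ Finset.Ico k1 (k2+1), |base k - S k| = vg := by
      rw [hvgdef]
      apply Finset.sum_congr rfl
      intro k hk
      have hm := Finset.mem_Ico.1 hk
      rw [hbaseA k hm.1 (by omega), abs_sub_comm,
        abs_of_nonneg (by linarith only [hSd k (by omega)])]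
    have h3 : ∑ k ∈ Finset.Ico (k2+1) K, |base k - S k|
        ≤ beta2 + (eps + vg + beta2) := by
      have hterm : ∀ k ∈ Finset.Ico (k2+1) K, |base k - S k|
          ≤ (Sstar k - min (S k) 0) + max (S k) 0 := by
        intro k hk
        have hm := Finset.mem_Ico.1 hk
        rw [hbaseB k (by omega) hm.2]
        have e1 : min (S k) 0 = S k - max (S k) 0 := hminS _
        have e2 := hSstar_ge_neg k
        have e3 : (0:ℝ) ≤ max (S k) 0 := le_max_right _ _
        rw [abs_le]
        constructor <;> linarith only [e1, e2, e3, le_max_left (S k) 0]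
      calc ∑ k ∈ Finset.Ico (k2+1) K, |base k - S k|
          ≤ ∑ k ∈ Finset.Ico (k2+1) K, ((Sstar k - min (S k) 0) + max (S k) 0) :=
            Finset.sum_le_sum hterm
        _ = (∑ k ∈ Finset.Ico (k2+1) K, Sstar k
              - ∑ k ∈ Finset.Ico (k2+1) K, min (S k) 0) + beta2 := by
            rw [hb2def, Finset.sum_add_distrib, Finset.sum_sub_distrib]
        _ = (-Tmin + N) + beta2 := by
            rw [hSstar_sum]
            have hmm : ∑ k ∈ Finset.Ico (k2+1) K, min (S k) 0 = -N := by
              rw [hNdef]; ring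
            rw [hmm]; ring
        _ = beta2 + (eps + vg + beta2) := by rw [hNeq]; ring
    have h4 : beta2 ≤ vb2 := hbeta2vb2
    have h5 : eps ≤ vb1 := hepsle
    rw [hvdef]
    linarith only [h1, h2, h3, h4, h5, hva0, hvb10, hvb20, hvg0, hbeta20, heps0]
  -- pointwise bounds for the quadratic part
  have hdabs : ∀ k < K, |d k| ≤ Dsum := by
    intro k hk
    have he : |d k| = |pgmin - pL k| := by simp [hddef]
    rw [hDdef, he]
    exact Finset.single_le_sum (f := fun j => |pgmin - pL j|)
      (fun j _ => abs_nonneg _) (Finset.mem_range.2 hk)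
  have hbaseabs : ∀ k < K, |base k| ≤ Dsum := by
    intro k hk
    rcases lt_or_ge k k1 with h|h
    · rw [hbase1 k h]; simpa using hDsum0
    rcases le_or_gt k k2 with h'|h'
    · rw [hbaseA k h h']; exact hdabs k hk
    · rw [hbaseB k h' hk]
      have h1 := hSstar_ged k h' hk
      have h2 := hSstar_np k
      have h3 := hdoff k hk (by omega)
      have he : |Sstar k| ≤ |d k| := by
        rw [abs_of_nonpos h2, abs_of_nonpos h3.le]; linarith only [h1]
      exact le_trans he (hdabs k hk)
  have hPLabs : ∀ k < K, |pL k| ≤ PLsum := fun k hk => by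
    rw [hPLdef]
    exact Finset.single_le_sum (f := fun j => |pL j|)
      (fun j _ => abs_nonneg _) (Finset.mem_range.2 hk)
  -- quadratic part difference
  have hQdiff : ∑ k ∈ Finset.range K, ((1/2) * (base k)^2 + pL k * base k)
      - ∑ k ∈ Finset.range K, ((1/2) * (S k)^2 + pL k * S k) ≤ CQ * (4 * v) := by
    rw [← Finset.sum_sub_distrib]
    have hterm : ∀ k ∈ Finset.range K,
        ((1/2)*(base k)^2 + pL k * base k) - ((1/2)*(S k)^2 + pL k * S k)
          ≤ CQ * |base k - S k| := by
      intro k hk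
      have hk' := Finset.mem_range.1 hk
      have h1 : |(1/2) * (base k + S k) + pL k| ≤ CQ := by
        have b1 := hbaseabs k hk'
        have b2 := hSb k hk'
        have b3 := hPLabs k hk'
        have hb : |(1/2)*(base k + S k) + pL k|
            ≤ (1/2)*(|base k| + |S k|) + |pL k| := by
          calc |(1/2)*(base k + S k) + pL k|
              ≤ |(1/2)*(base k + S k)| + |pL k| := abs_add_le _ _
            _ ≤ _ := by
                rw [abs_mul, abs_of_nonneg (by norm_num : (0:ℝ) ≤ 1/2)]
                linarith only [abs_add_le (base k) (S k)]
        have hR0 : 0 ≤ R := by rw [hRdef]; positivity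
        clear_value R Dsum PLsum CQ
        rw [hCQdef]
        linarith only [hb, b1, b2, b3, hR0, hDsum0, hPLsum0]
      have h2 : ((1/2)*(base k)^2 + pL k * base k) - ((1/2)*(S k)^2 + pL k * S k)
          = (base k - S k) * ((1/2)*(base k + S k) + pL k) := by ring
      rw [h2]
      calc (base k - S k) * ((1/2)*(base k + S k) + pL k)
          ≤ |(base k - S k) * ((1/2)*(base k + S k) + pL k)| := le_abs_self _
        _ = |base k - S k| * |(1/2)*(base k + S k) + pL k| := abs_mul _ _
        _ ≤ |base k - S k| * CQ := mul_le_mul_of_nonneg_left h1 (abs_nonneg _)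
        _ = CQ * |base k - S k| := mul_comm _ _
    calc ∑ k ∈ Finset.range K,
        (((1/2)*(base k)^2 + pL k * base k) - ((1/2)*(S k)^2 + pL k * S k))
        ≤ ∑ k ∈ Finset.range K, CQ * |base k - S k| := Finset.sum_le_sum hterm
      _ = CQ * ∑ k ∈ Finset.range K, |base k - S k| := by rw [Finset.mul_sum]
      _ ≤ CQ * (4*v) := mul_le_mul_of_nonneg_left hdist hCQ0
  -- assemble the main comparison
  have hle := hmin q (fun m k => max (q m k) 0) hqfeas
  rw [hObj p pchg, hObj q (fun m k => max (q m k) 0)] at hle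
  have hc0s : ∑ k ∈ Finset.range K, pchg 0 k = T0 := by
    rw [hT0def]
    exact Finset.sum_congr rfl fun k hk => hpchg 0 (by norm_num) k (Finset.mem_range.1 hk)
  have hc1s : ∑ k ∈ Finset.range K, pchg 1 k = T1 := by
    rw [hT1def]
    exact Finset.sum_congr rfl fun k hk => hpchg 1 (by norm_num) k (Finset.mem_range.1 hk)
  have hQp : ∑ k ∈ Finset.range K, ((1/2)*(p 0 k + p 1 k)^2 + pL k*(p 0 k + p 1 k))
      = ∑ k ∈ Finset.range K, ((1/2)*(S k)^2 + pL k * S k) :=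
    Finset.sum_congr rfl fun k _ => by simp only [hSdef]
  have hQq : ∑ k ∈ Finset.range K, ((1/2)*(q 0 k + q 1 k)^2 + pL k*(q 0 k + q 1 k))
      = ∑ k ∈ Finset.range K, ((1/2)*(base k)^2 + pL k * base k) :=
    Finset.sum_congr rfl fun k _ => by rw [hqS k]
  simp only [hc0s, hc1s, hq0pp, hq1pp] at hle
  rw [hQp, hQq] at hle
  have hca : ∀ m, m < 2 → 4*(CQ+1) ≤ c m / a := by
    intro m hm
    rw [le_div_iff₀ ha]
    calc 4*(CQ+1)*a = 4*a*(CQ+1) := by ring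
      _ ≤ c m := hc m hm
  have hch0 : (c 0 / a) * (t0 - T0) ≤ 4*(CQ+1) * (t0 - T0) :=
    mul_le_mul_of_nonpos_right (hca 0 (by norm_num)) (by linarith only [ht0T])
  have hch1 : (c 1 / a) * (t1 - T1) ≤ 4*(CQ+1) * (t1 - T1) :=
    mul_le_mul_of_nonpos_right (hca 1 (by norm_num)) (by linarith only [ht1T])
  have hkey2 : 4*(CQ+1)*(t0-T0) + 4*(CQ+1)*(t1-T1) = -(4*(CQ+1)*v) := by
    have e1 : t0 + t1 = Tmin := by rw [ht0def]; ring
    calc 4*(CQ+1)*(t0-T0) + 4*(CQ+1)*(t1-T1)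
        = 4*(CQ+1)*((t0+t1) - (T0+T1)) := by ring
      _ = 4*(CQ+1)*(Tmin - (Tmin + v)) := by rw [e1, hvT]
      _ = -(4*(CQ+1)*v) := by ring
  have ebridge : (c 0/a)*(t0-T0) + (c 1/a)*(t1-T1)
      = ((c 0/a)*t0 + (c 1/a)*t1) - ((c 0/a)*T0 + (c 1/a)*T1) := by ring
  have hv0 : v ≤ 0 := by
    clear_value q base Sstar S d v CQ T0 T1 t0 t1 va vb1 vb2 vg Tmin N beta2 eps R Dsum PLsum lam0 lam1 P0 P1
    linarith only [hle, hQdiff, hch0, hch1, hkey2, ebridge]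
  have hsum0 : va + vb1 + vb2 + vg ≤ 0 := by rw [← hvdef]; exact hv0
  have hva' : va = 0 := by linarith only [hsum0, hva0, hvb10, hvb20, hvg0]
  have hvb1' : vb1 = 0 := by linarith only [hsum0, hva0, hvb10, hvb20, hvg0]
  have hvb2' : vb2 = 0 := by linarith only [hsum0, hva0, hvb10, hvb20, hvg0]
  have hvg' : vg = 0 := by linarith only [hsum0, hva0, hvb10, hvb20, hvg0]
  -- pointwise consequences
  have hApos : ∀ k, k1 ≤ k → k ≤ k2 → 0 ≤ p 0 k ∧ 0 ≤ p 1 k := by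
    intro k hka hkb
    have h0 : ∀ j ∈ Finset.Ico k1 (k2+1),
        (0:ℝ) ≤ max (-(p 0 j)) 0 + max (-(p 1 j)) 0 := fun j _ => by positivity
    have hz := (Finset.sum_eq_zero_iff_of_nonneg h0).1
      (by rw [← hvadef]; exact hva') k (Finset.mem_Ico.2 ⟨hka, by omega⟩)
    have e0 : max (-(p 0 k)) 0 = 0 := le_antisymm
      (by linarith only [hz, le_max_right (-(p 1 k)) (0:ℝ)]) (le_max_right _ _)
    have e1 : max (-(p 1 k)) 0 = 0 := le_antisymm
      (by linarith only [hz, le_max_right (-(p 0 k)) (0:ℝ)]) (le_max_right _ _)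
    constructor
    · have hq := pp_zero e0; linarith only [hq]
    · have hq := pp_zero e1; linarith only [hq]
  have hoffneg : ∀ m, m < 2 → ∀ k < K, ¬(k1 ≤ k ∧ k ≤ k2) → p m k ≤ 0 := by
    intro m hm k hk hnk
    rcases lt_or_ge k k1 with h|h
    · have h0 : ∀ j ∈ Finset.range k1,
          (0:ℝ) ≤ max (p 0 j) 0 + max (p 1 j) 0 := fun j _ => by positivity
      have hz := (Finset.sum_eq_zero_iff_of_nonneg h0).1
        (by rw [← hvb1def]; exact hvb1') k (Finset.mem_range.2 h)
      have e0 : max (p 0 k) 0 = 0 := le_antisymm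
        (by linarith only [hz, le_max_right (p 1 k) (0:ℝ)]) (le_max_right _ _)
      have e1 : max (p 1 k) 0 = 0 := le_antisymm
        (by linarith only [hz, le_max_right (p 0 k) (0:ℝ)]) (le_max_right _ _)
      interval_cases m
      · exact pp_zero e0
      · exact pp_zero e1
    · have hk2' : k2 + 1 ≤ k := by omega
      have h0 : ∀ j ∈ Finset.Ico (k2+1) K,
          (0:ℝ) ≤ max (p 0 j) 0 + max (p 1 j) 0 := fun j _ => by positivity
      have hz := (Finset.sum_eq_zero_iff_of_nonneg h0).1
        (by rw [← hvb2def]; exact hvb2') k (Finset.mem_Ico.2 ⟨hk2', hk⟩)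
      have e0 : max (p 0 k) 0 = 0 := le_antisymm
        (by linarith only [hz, le_max_right (p 1 k) (0:ℝ)]) (le_max_right _ _)
      have e1 : max (p 1 k) 0 = 0 := le_antisymm
        (by linarith only [hz, le_max_right (p 0 k) (0:ℝ)]) (le_max_right _ _)
      interval_cases m
      · exact pp_zero e0
      · exact pp_zero e1
  have hzero1 : ∀ m, m < 2 → ∀ k < k1, p m k = 0 := by
    intro m hm
    have hterm : ∀ j ∈ Finset.range k1, p m j ≤ 0 := fun j hj =>
      hoffneg m hm j (by have := Finset.mem_range.1 hj; omega)
        (by have := Finset.mem_range.1 hj; omega)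
    have hsum' : ∑ j ∈ Finset.range k1, p m j = 0 :=
      le_antisymm (Finset.sum_nonpos hterm) (hP m hm k1 (by omega)).1
    have hall := (Finset.sum_eq_zero_iff_of_nonpos hterm).1 hsum'
    intro k hk
    exact hall k (Finset.mem_range.2 hk)
  have hSeqd : ∀ k, k1 ≤ k → k ≤ k2 → p 0 k + p 1 k = pgmin - pL k := by
    intro k hka hkb
    have h0 : ∀ j ∈ Finset.Ico k1 (k2+1), (0:ℝ) ≤ S j - d j := fun j hj => by
      have hmem := Finset.mem_Ico.1 hj
      linarith only [hSd j (by omega)]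
    have hz := (Finset.sum_eq_zero_iff_of_nonneg h0).1
      (by rw [← hvgdef]; exact hvg') k (Finset.mem_Ico.2 ⟨hka, by omega⟩)
    have e : S k = d k := by linarith only [hz]
    simpa [hSdef, hddef] using e
  -- final assembly
  refine ⟨fun m k => if pgmin - pL k = 0 then 1/2 else p m k / (pgmin - pL k), ?_, ?_⟩
  · intro k hka hkb
    have hd0 := hdA k hka hkb
    simp only [hddef] at hd0
    have hp := hApos k hka hkb
    have hSk := hSeqd k hka hkb
    by_cases h : pgmin - pL k = 0
    · simp only [if_pos h]; norm_num
    · simp only [if_neg h]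
      refine ⟨div_nonneg hp.1 hd0, div_nonneg hp.2 hd0, ?_⟩
      rw [← add_div, hSk]
      exact div_self h
  · intro m hm
    refine ⟨fun k hk => hzero1 m hm k hk, ?_, ?_, ?_⟩
    · intro k hka hkb
      have hkK : k < K := by omega
      have hp := hApos k hka hkb
      have hpm : 0 ≤ p m k := by
        interval_cases m
        · exact hp.1
        · exact hp.2
      constructor
      · by_cases h : pgmin - pL k = 0
        · simp only [if_pos h]
          have hSk := hSeqd k hka hkb
          rw [h] at hSk
          have h0 : p 0 k = 0 := by linarith only [hp.1, hp.2, hSk]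
          have h1 : p 1 k = 0 := by linarith only [hp.1, hp.2, hSk]
          have hpm0 : p m k = 0 := by
            interval_cases m
            · exact h0
            · exact h1
          rw [hpm0, h]; ring
        · simp only [if_neg h]
          rw [div_mul_cancel₀ _ h]
      · rw [hpchg m hm k hkK, max_eq_left hpm]
    · intro k hka hkb
      exact hoffneg m hm k hkb (by omega)
    · intro k hk hnk
      rw [hpchg m hm k hk, max_eq_right (hoffneg m hm k hk hnk)]
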